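/- With F as the polynomial solution of the Beta(α,β) Stein equation for h(x) = x^k, for every integer n ≥ 1 and all x ∈ [0,1], the n-th derivative satisfies |F^{(n)}(x)| ≤ k(k-1)···(k-n+1) / (n(α+β+n-1)). -/

import Mathlib

set_option maxHeartbeats 1000000


open Finset

private lemma iter_deriv_poly (K : ℕ) :
    ∀ (n : ℕ) (a : ℕ → ℝ) (e : ℕ → ℕ),
      iteratedDeriv n (fun x : ℝ => ∑ j ∈ Finset.range K, a j * x ^ e j)
      = fun x => ∑ j ∈ Finset.range K, a j * ((e j).descFactorial n : ℝ) * x ^ (e j - n) := by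
  intro n
  induction n with
  | zero => intro a e; simp
  | succ n ih =>
    intro a e
    rw [iteratedDeriv_succ']
    have hd : (deriv fun x : ℝ => ∑ j ∈ Finset.range K, a j * x ^ e j)
        = fun x => ∑ j ∈ Finset.range K, (a j * e j) * x ^ (e j - 1) := by
      funext x
      rw [deriv_fun_sum (fun i _ => (differentiableAt_pow (e i)).const_mul (a i))]
      refine Finset.sum_congr rfl fun j _ => ?_
      rw [deriv_const_mul _ (differentiableAt_pow _), deriv_pow_field]
      ring
    rw [hd, ih]
    funext x
    refine Finset.sum_congr rfl fun j _ => ?_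
    have h2 : e j - 1 - n = e j - (n + 1) := by omega
    have h1 : ((e j : ℝ)) * (((e j - 1).descFactorial n : ℕ) : ℝ)
        = (((e j).descFactorial (n + 1) : ℕ) : ℝ) := by
      cases' (e j) with m
      · simp
      · rw [Nat.succ_descFactorial_succ]
        push_cast
        simp
    rw [h2, ← h1]
    ring

private lemma key_ineq (α β M N D' : ℝ) (hα : 0 < α) (hβ : 0 < β)
    (hN : 1 ≤ N) (hMN : N ≤ M) (hD : 0 ≤ D') :
    M * D' / (M * (M - 1 + α + β)) ≤
      (M * D' * (M - 1 + α + β) - (M - N) * D' * (M - 1 + α)) /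
        ((M - 1 + α + β) * (N * (α + β + N - 1))) := by
  have h1 : (0:ℝ) < M - 1 + α + β := by nlinarith
  have h2 : (0:ℝ) < M := by linarith
  have h3 : (0:ℝ) < N * (α + β + N - 1) := by nlinarith
  rw [div_le_div_iff₀ (by positivity) (by positivity)]
  have hkey : N * (α + β + N - 1) ≤ M * (M - 1 + α + β) - (M - N) * (M - 1 + α) := by
    nlinarith [mul_nonneg (sub_nonneg.2 hMN) hβ.le,
      mul_nonneg (sub_nonneg.2 hMN) (by linarith : (0:ℝ) ≤ N)]
  nlinarith [mul_le_mul_of_nonneg_left hkey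
    (by positivity : (0:ℝ) ≤ D' * (M * (M - 1 + α + β)))]

private lemma main_aux (α β : ℝ) (hα : 0 < α) (hβ : 0 < β) (k n : ℕ)
    (hn : 1 ≤ n) (hnk : n ≤ k) (x : ℝ) (hx0 : 0 ≤ x) (hx1 : x ≤ 1) :
    ∑ j ∈ Finset.range k,
        (1 / (((k : ℝ) - j) * ((k : ℝ) - j - 1 + α + β)))
          * (∏ i ∈ Finset.Icc 1 j, ((k : ℝ) - i + α) / ((k : ℝ) - i + α + β))
          * (((k - j).descFactorial n : ℝ) * x ^ (k - j - n))
      ≤ (k.descFactorial n : ℝ) / (↑n * (α + β + ↑n - 1)) := by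
  have hprod : ∀ j : ℕ, j ≤ k →
      0 ≤ ∏ i ∈ Finset.Icc 1 j, ((k : ℝ) - i + α) / ((k : ℝ) - i + α + β) := by
    intro j hj
    refine Finset.prod_nonneg fun i hi => ?_
    have hik : (i:ℝ) ≤ k := by exact_mod_cast le_trans (Finset.mem_Icc.1 hi).2 hj
    apply div_nonneg <;> linarith
  set b : ℕ → ℝ := fun j => ((k - j).descFactorial n : ℝ) / (↑n * (α + β + ↑n - 1))
      * ∏ i ∈ Finset.Icc 1 j, ((k : ℝ) - i + α) / ((k : ℝ) - i + α + β) with hb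
  have hbk : b k = 0 := by
    have h0 : (k - k).descFactorial n = 0 := by
      rw [Nat.sub_self]; exact Nat.descFactorial_eq_zero_iff_lt.2 (by omega)
    simp only [hb, h0, Nat.cast_zero, zero_div, zero_mul]
  have hb0 : b 0 = (k.descFactorial n : ℝ) / (↑n * (α + β + ↑n - 1)) := by
    simp [hb]
  calc ∑ j ∈ Finset.range k,
        (1 / (((k : ℝ) - j) * ((k : ℝ) - j - 1 + α + β)))
          * (∏ i ∈ Finset.Icc 1 j, ((k : ℝ) - i + α) / ((k : ℝ) - i + α + β))
          * (((k - j).descFactorial n : ℝ) * x ^ (k - j - n))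
      ≤ ∑ j ∈ Finset.range k, (b j - b (j+1)) := by
        refine Finset.sum_le_sum fun j hj => ?_
        have hjk : j < k := Finset.mem_range.1 hj
        have hj1 : (j:ℝ) + 1 ≤ k := by exact_mod_cast hjk
        have hPP0 : 0 ≤ ∏ i ∈ Finset.Icc 1 j, ((k : ℝ) - i + α) / ((k : ℝ) - i + α + β) :=
          hprod j hjk.le
        set PP : ℝ := ∏ i ∈ Finset.Icc 1 j, ((k : ℝ) - i + α) / ((k : ℝ) - i + α + β) with hPP
        have hsplit : (∏ i ∈ Finset.Icc 1 (j+1), ((k : ℝ) - i + α) / ((k : ℝ) - i + α + β))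
            = PP * (((k:ℝ) - ↑(j+1) + α) / ((k:ℝ) - ↑(j+1) + α + β)) :=
          Finset.prod_Icc_succ_top (Nat.le_add_left 1 j) _
        set M : ℝ := (k:ℝ) - j with hM
        set N : ℝ := (n:ℝ) with hN
        have hM1 : 1 ≤ M := by rw [hM]; linarith
        have hNpos : 1 ≤ N := by rw [hN]; exact_mod_cast hn
        have hMcast : ((k - j : ℕ) : ℝ) = M := by rw [hM, Nat.cast_sub hjk.le]
        have hpcast : ((k:ℝ) - ↑(j+1) + α) = M - 1 + α := by rw [hM]; push_cast; ring
        have hpcast2 : ((k:ℝ) - ↑(j+1) + α + β) = M - 1 + α + β := by rw [hM]; push_cast; ring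
        by_cases hmn : k - j < n
        · have hD : (k - j).descFactorial n = 0 := Nat.descFactorial_eq_zero_iff_lt.2 hmn
          have hD2 : (k - (j+1)).descFactorial n = 0 :=
            Nat.descFactorial_eq_zero_iff_lt.2 (by omega)
          simp [hb, hD, hD2]
        · push_neg at hmn
          obtain ⟨m, hm⟩ : ∃ m, k - j = m + 1 := ⟨k - j - 1, by omega⟩
          obtain ⟨n', hn'⟩ : ∃ n', n = n' + 1 := ⟨n - 1, by omega⟩
          have eD : (k - j).descFactorial n = (k - j) * ((k - j - 1).descFactorial (n - 1)) := by
            rw [hm, hn', Nat.succ_descFactorial_succ]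
            simp
          have eD2 : (k - (j+1)).descFactorial n
              = (k - j - n) * ((k - j - 1).descFactorial (n - 1)) := by
            have h1 : k - (j+1) = m := by omega
            have h2 : k - j - 1 = m := by omega
            rw [h1, h2, hn', Nat.descFactorial_succ]
            congr 1
            omega
          set D' : ℝ := ((k - j - 1).descFactorial (n - 1) : ℝ) with hD'
          have hD'0 : 0 ≤ D' := Nat.cast_nonneg _
          have hMN : N ≤ M := by rw [← hMcast, hN]; exact_mod_cast hmn
          have hDr : ((k - j).descFactorial n : ℝ) = M * D' := by
            rw [eD, Nat.cast_mul, hMcast]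
          have hD2r : ((k - (j+1)).descFactorial n : ℝ) = (M - N) * D' := by
            rw [eD2, Nat.cast_mul]
            congr 1
            rw [Nat.cast_sub hmn, hMcast]
          have key := mul_le_mul_of_nonneg_right
            (key_ineq α β M N D' hα hβ hNpos hMN hD'0) hPP0
          have h1 : (0:ℝ) < M - 1 + α + β := by nlinarith
          have h3 : (0:ℝ) < N * (α + β + N - 1) := by nlinarith
          have hMpos : (0:ℝ) < M := by linarith
          calc (1 / (M * (M - 1 + α + β))) * PP * (((k - j).descFactorial n : ℝ) * x ^ (k - j - n))
              ≤ (M * D' / (M * (M - 1 + α + β))) * PP := by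
                rw [hDr]
                have hrw : 1 / (M * (M - 1 + α + β)) * PP * (M * D' * x ^ (k - j - n))
                    = (M * D' / (M * (M - 1 + α + β))) * PP * x ^ (k - j - n) := by ring
                rw [hrw]
                apply mul_le_of_le_one_right
                · exact mul_nonneg (div_nonneg (mul_nonneg hMpos.le hD'0) (mul_nonneg hMpos.le h1.le)) hPP0
                · exact pow_le_one₀ hx0 hx1
            _ ≤ ((M * D' * (M - 1 + α + β) - (M - N) * D' * (M - 1 + α)) /
                  ((M - 1 + α + β) * (N * (α + β + N - 1)))) * PP := key
            _ = b j - b (j+1) := by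
                have hq : ((M * D' * (M - 1 + α + β) - (M - N) * D' * (M - 1 + α)) /
                      ((M - 1 + α + β) * (N * (α + β + N - 1))))
                    = M * D' / (N * (α + β + N - 1))
                      - (M - N) * D' / (N * (α + β + N - 1)) * ((M - 1 + α) / (M - 1 + α + β)) := by
                  field_simp
                rw [hb]
                simp only [hsplit, hDr, hD2r, hpcast, hpcast2]
                rw [hq]
                ring
      _ = b 0 - b k := Finset.sum_range_sub' b k
      _ ≤ (k.descFactorial n : ℝ) / (↑n * (α + β + ↑n - 1)) := by rw [hbk, hb0]; simp

/-- Higher derivative bounds for the polynomial solution to the Beta(α,β) Stein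
equation for `h(x) = x^k`:
`|F^(n)(x)| ≤ k(k-1)⋯(k-n+1)/(n(α+β+n-1))` on `[0,1]` for `1 ≤ n ≤ k`. -/
theorem stmt_12 (α β : ℝ) (hα : 0 < α) (hβ : 0 < β) (k : ℕ) (hk : 0 < k)
    (C : ℝ) (F : ℝ → ℝ)
    (hF : ∀ x : ℝ, F x =
      -∑ j ∈ Finset.range k,
          (1 / (((k : ℝ) - j) * ((k : ℝ) - j - 1 + α + β)))
            * (∏ i ∈ Finset.Icc 1 j, ((k : ℝ) - i + α) / ((k : ℝ) - i + α + β))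
            * x ^ (k - j)
        + C) :
    ∀ n : ℕ, 1 ≤ n → n ≤ k → ∀ x ∈ Set.Icc (0 : ℝ) 1,
      |iteratedDeriv n F x| ≤ (k.descFactorial n : ℝ) / (n * (α + β + n - 1)) := by
  intro n hn hnk x hx
  obtain ⟨hx0, hx1⟩ := hx
  set a : ℕ → ℝ := fun j => if j = k then C else
    -((1 / (((k : ℝ) - j) * ((k : ℝ) - j - 1 + α + β)))
      * (∏ i ∈ Finset.Icc 1 j, ((k : ℝ) - i + α) / ((k : ℝ) - i + α + β))) with ha
  have hF' : F = fun y => ∑ j ∈ Finset.range (k+1), a j * y ^ (k - j) := by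
    funext y
    rw [hF y, Finset.sum_range_succ]
    have h1 : a k * y ^ (k - k) = C := by simp [ha]
    rw [h1]
    congr 1
    rw [← Finset.sum_neg_distrib]
    refine Finset.sum_congr rfl fun j hj => ?_
    have hjk : j ≠ k := by have := Finset.mem_range.1 hj; omega
    simp only [ha, if_neg hjk]
    ring
  rw [hF', iter_deriv_poly (k+1) n a (fun j => k - j)]
  simp only
  rw [Finset.sum_range_succ]
  have hzero : a k * (((k - k).descFactorial n : ℕ) : ℝ) * x ^ (k - k - n) = 0 := by
    have h0 : (k - k).descFactorial n = 0 := by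
      rw [Nat.sub_self]; exact Nat.descFactorial_eq_zero_iff_lt.2 (by omega)
    rw [h0, Nat.cast_zero, mul_zero, zero_mul]
  rw [hzero, add_zero]
  have hsum : ∑ j ∈ Finset.range k, a j * (((k - j).descFactorial n : ℕ) : ℝ) * x ^ (k - j - n)
      = -∑ j ∈ Finset.range k,
          (1 / (((k : ℝ) - j) * ((k : ℝ) - j - 1 + α + β)))
            * (∏ i ∈ Finset.Icc 1 j, ((k : ℝ) - i + α) / ((k : ℝ) - i + α + β))
            * (((k - j).descFactorial n : ℝ) * x ^ (k - j - n)) := by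
    rw [← Finset.sum_neg_distrib]
    refine Finset.sum_congr rfl fun j hj => ?_
    have hjk : j ≠ k := by have := Finset.mem_range.1 hj; omega
    simp only [ha, if_neg hjk]
    ring
  rw [hsum, abs_neg]
  have hS : 0 ≤ ∑ j ∈ Finset.range k,
      (1 / (((k : ℝ) - j) * ((k : ℝ) - j - 1 + α + β)))
        * (∏ i ∈ Finset.Icc 1 j, ((k : ℝ) - i + α) / ((k : ℝ) - i + α + β))
        * (((k - j).descFactorial n : ℝ) * x ^ (k - j - n)) := by
    refine Finset.sum_nonneg fun j hj => ?_
    have hjk : j < k := Finset.mem_range.1 hj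
    have hj1 : (j:ℝ) + 1 ≤ k := by exact_mod_cast hjk
    have hprodnn : 0 ≤ ∏ i ∈ Finset.Icc 1 j, ((k : ℝ) - i + α) / ((k : ℝ) - i + α + β) := by
      refine Finset.prod_nonneg fun i hi => ?_
      have hik : (i:ℝ) ≤ k := by exact_mod_cast le_trans (Finset.mem_Icc.1 hi).2 hjk.le
      apply div_nonneg <;> linarith
    have hd1 : (0:ℝ) ≤ 1 / (((k : ℝ) - j) * ((k : ℝ) - j - 1 + α + β)) := by
      apply div_nonneg
      · norm_num
      · apply mul_nonneg <;> nlinarith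
    apply mul_nonneg (mul_nonneg hd1 hprodnn)
    exact mul_nonneg (Nat.cast_nonneg _) (pow_nonneg hx0 _)
  rw [abs_of_nonneg hS]
  exact main_aux α β hα hβ k n hn hnk x hx0 hx1
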